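/- Define x_lim(r) = t(r)²/(2∫₀ʳ t(s)ds), where t solves the Spin(7) evolution system with t(0) = 0, ν(0) = ν₀ > 0. Then x_lim solves the instanton ODE dx/dr = -(2/t)x(x - (1 - 2t²/ν²)) on (0,∞). -/

import Mathlib

open Set

theorem spin7_xlim_solves_instanton_ODE (t ν : ℝ → ℝ) (ν₀ : ℝ) (hν₀ : 0 < ν₀)
    (ht0 : t 0 = 0) (hν0 : ν 0 = ν₀)
    (htc : ContinuousOn t (Ici 0)) (hνc : ContinuousOn ν (Ici 0))
    (hpos : ∀ r > 0, 0 < t r ∧ 0 < ν r)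
    (h1 : ∀ r > 0, HasDerivAt (fun s => ν s ^ 2) (6 * t r) r)
    (h2 : ∀ r > 0, HasDerivAt t (1 - 2 * t r ^ 2 / ν r ^ 2) r) :
    ∀ r > 0,
      HasDerivAt (fun s => t s ^ 2 / (2 * ∫ u in (0 : ℝ)..s, t u))
        (-(2 / t r) * (t r ^ 2 / (2 * ∫ u in (0 : ℝ)..r, t u)) *
          (t r ^ 2 / (2 * ∫ u in (0 : ℝ)..r, t u) - (1 - 2 * t r ^ 2 / ν r ^ 2))) r := by
  intro r hr
  obtain ⟨htr, hνr⟩ := hpos r hr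
  -- integrability
  have hint : IntervalIntegrable t MeasureTheory.volume 0 r :=
    (htc.mono (by
      intro x hx
      rcases hx with hx
      simp only [Set.uIcc_of_le hr.le] at hx
      exact hx.1)).intervalIntegrable
  -- positivity of the integral
  have hTpos : 0 < ∫ u in (0:ℝ)..r, t u := by
    apply intervalIntegral.intervalIntegral_pos_of_pos_on hint _ hr
    intro x hx
    exact (hpos x hx.1).1
  -- derivative of the integral
  have hca : ContinuousAt t r := htc.continuousAt (Ici_mem_nhds hr)
  have hmeas : StronglyMeasurableAtFilter t (nhds r) MeasureTheory.volume := by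
    refine ContinuousOn.stronglyMeasurableAtFilter isOpen_Ioi ?_ r hr
    exact htc.mono Ioi_subset_Ici_self
  have hF : HasDerivAt (fun s => ∫ u in (0:ℝ)..s, t u) (t r) r :=
    intervalIntegral.integral_hasDerivAt_right hint hmeas hca
  have ht' := h2 r hr
  have hnum : HasDerivAt (fun s => t s ^ 2) (2 * t r * (1 - 2 * t r ^ 2 / ν r ^ 2)) r := by
    have := ht'.fun_pow 2
    simpa [mul_comm, mul_assoc, mul_left_comm] using this
  have hden : HasDerivAt (fun s => 2 * ∫ u in (0:ℝ)..s, t u) (2 * t r) r :=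
    hF.const_mul 2
  have hden0 : (2 * ∫ u in (0:ℝ)..r, t u) ≠ 0 := by positivity
  have := hnum.fun_div hden hden0
  refine this.congr_deriv ?_
  field_simp [htr.ne', hνr.ne']
  ring
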